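/- Lower bound on the (p,q,r)-norm of the Strassen tensor: for all p,q,r ∈ [1,∞] and l,m,n ∈ ℕ, 1/(l^{|1/q−1/2|} · m^{|1/p−1/2|} · n^{|1/r−1/2|}) ≤ ‖μ_{l,m,n}‖_{p,q,r}. -/

import Mathlib

open scoped ENNReal BigOperators
open Matrix

/-- The vector ℓ^p norm on `Fin n → 𝕜` for `p ∈ [1,∞]`. -/
noncomputable def lpNorm (p : ℝ≥0∞) {n : ℕ} {𝕜 : Type*} [RCLike 𝕜] (x : Fin n → 𝕜) : ℝ :=
  if p = ∞ then ⨆ i, ‖x i‖ else (∑ i, ‖x i‖ ^ p.toReal) ^ (1 / p.toReal)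

/-- The matrix (p,q)-operator norm: `max_{z ≠ 0} ‖Az‖_q / ‖z‖_p`. -/
noncomputable def opNorm (p q : ℝ≥0∞) {m n : ℕ} {𝕜 : Type*} [RCLike 𝕜]
    (A : Matrix (Fin m) (Fin n) 𝕜) : ℝ :=
  ⨆ z : {z : Fin n → 𝕜 // z ≠ 0}, lpNorm q (A.mulVec z.1) / lpNorm p z.1

/-- The (p,q,r)-norm of the Strassen matrix multiplication tensor μ_{l,m,n}:
`max` over nonzero `X ∈ 𝕜^{l×m}`, `M ∈ 𝕜^{m×n}`, `Y ∈ 𝕜^{n×l}` of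
`|tr(XMY)| / (‖X‖_{p,q} ‖Y‖_{q,r} ‖M‖_{r,p})`. -/
noncomputable def muNorm (𝕜 : Type*) [RCLike 𝕜] (p q r : ℝ≥0∞) (l m n : ℕ) : ℝ :=
  ⨆ T : {T : Matrix (Fin l) (Fin m) 𝕜 × Matrix (Fin m) (Fin n) 𝕜 × Matrix (Fin n) (Fin l) 𝕜 //
      T.1 ≠ 0 ∧ T.2.1 ≠ 0 ∧ T.2.2 ≠ 0},
    ‖(T.1.1 * T.1.2.1 * T.1.2.2).trace‖ /
      (opNorm p q T.1.1 * opNorm q r T.1.2.2 * opNorm r p T.1.2.1)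

section Aux

variable {𝕜 : Type*} [RCLike 𝕜]

lemma aux_toReal_one_le {p : ℝ≥0∞} (hp : 1 ≤ p) (hne : p ≠ ∞) : 1 ≤ p.toReal := by
  have := ENNReal.toReal_mono hne hp
  simpa using this

lemma aux_toReal_pos {p : ℝ≥0∞} (hp : 1 ≤ p) (hne : p ≠ ∞) : 0 < p.toReal :=
  lt_of_lt_of_le one_pos (aux_toReal_one_le hp hne)

lemma lpNorm_nonneg (p : ℝ≥0∞) {N : ℕ} (x : Fin N → 𝕜) : 0 ≤ lpNorm p x := by
  unfold lpNorm
  split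
  · exact Real.iSup_nonneg fun i => norm_nonneg _
  · exact Real.rpow_nonneg
      (Finset.sum_nonneg fun i _ => Real.rpow_nonneg (norm_nonneg _) _) _

lemma apply_le_lpNorm {p : ℝ≥0∞} (hp : 1 ≤ p) {N : ℕ} (x : Fin N → 𝕜) (i : Fin N) :
    ‖x i‖ ≤ lpNorm p x := by
  unfold lpNorm
  split
  · exact le_ciSup (f := fun i => ‖x i‖) (Set.Finite.bddAbove (Set.finite_range _)) i
  · rename_i h
    have ht : 0 < p.toReal := aux_toReal_pos hp h
    have key : ‖x i‖ = (‖x i‖ ^ p.toReal) ^ (1 / p.toReal) := by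
      rw [← Real.rpow_mul (norm_nonneg _), mul_one_div_cancel ht.ne', Real.rpow_one]
    rw [key]
    apply Real.rpow_le_rpow (Real.rpow_nonneg (norm_nonneg _) _)
      (Finset.single_le_sum (fun j _ => Real.rpow_nonneg (norm_nonneg _) _)
        (Finset.mem_univ i))
      (by positivity)

lemma sum_rpow_le_rpow_sum {N : ℕ} {f : Fin N → ℝ} (hf : ∀ i, 0 ≤ f i) {t : ℝ}
    (ht : 1 ≤ t) : ∑ i, f i ^ t ≤ (∑ i, f i) ^ t := by
  have ht0 : 0 < t := lt_of_lt_of_le one_pos ht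
  set S := ∑ i, f i with hS
  have hS0 : 0 ≤ S := Finset.sum_nonneg fun i _ => hf i
  rcases eq_or_lt_of_le hS0 with h0 | hpos
  · have hall : ∀ i, f i = 0 := by
      intro i
      have h1 : f i ≤ S := Finset.single_le_sum (fun j _ => hf j) (Finset.mem_univ i)
      have := hf i
      linarith [h1, h0.symm ▸ this]
    rw [← h0]
    rw [Real.zero_rpow ht0.ne']
    apply le_of_eq
    apply Finset.sum_eq_zero
    intro i _
    rw [hall i, Real.zero_rpow ht0.ne']
  · calc ∑ i, f i ^ t ≤ ∑ i, S ^ (t - 1) * f i := by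
          apply Finset.sum_le_sum
          intro i _
          rcases eq_or_lt_of_le (hf i) with h0i | hposi
          · rw [← h0i, Real.zero_rpow ht0.ne', mul_zero]
          · have : f i ^ t = f i ^ (t - 1) * f i := by
              rw [show t = (t - 1) + 1 by ring, Real.rpow_add_one hposi.ne']
              ring_nf
            rw [this]
            apply mul_le_mul_of_nonneg_right _ (hf i)
            exact Real.rpow_le_rpow (hf i)
              (Finset.single_le_sum (fun j _ => hf j) (Finset.mem_univ i))
              (by linarith)
      _ = S ^ (t - 1) * S := by rw [← Finset.mul_sum]
      _ = S ^ t := by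
          rw [← Real.rpow_add_one hpos.ne' (t - 1)]
          ring_nf

lemma lpNorm_le_sum {q : ℝ≥0∞} (hq : 1 ≤ q) {N : ℕ} (x : Fin N → 𝕜) :
    lpNorm q x ≤ ∑ i, ‖x i‖ := by
  unfold lpNorm
  split
  · cases isEmpty_or_nonempty (Fin N) with
    | inl h =>
        rw [iSup_of_empty']
        simp [Real.sSup_empty, Finset.sum_nonneg]
    | inr h =>
        haveI := h
        exact ciSup_le fun i =>
          Finset.single_le_sum (fun j _ => norm_nonneg _) (Finset.mem_univ i)
  · rename_i h
    have ht : 1 ≤ q.toReal := aux_toReal_one_le hq h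
    have ht0 : 0 < q.toReal := lt_of_lt_of_le one_pos ht
    have h1 : ∑ i, ‖x i‖ ^ q.toReal ≤ (∑ i, ‖x i‖) ^ q.toReal :=
      sum_rpow_le_rpow_sum (fun i => norm_nonneg _) ht
    calc (∑ i, ‖x i‖ ^ q.toReal) ^ (1 / q.toReal)
        ≤ ((∑ i, ‖x i‖) ^ q.toReal) ^ (1 / q.toReal) :=
          Real.rpow_le_rpow
            (Finset.sum_nonneg fun i _ => Real.rpow_nonneg (norm_nonneg _) _) h1
            (by positivity)
      _ = ∑ i, ‖x i‖ := by
          rw [← Real.rpow_mul (Finset.sum_nonneg fun i _ => norm_nonneg _),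
            mul_one_div_cancel ht0.ne', Real.rpow_one]

lemma lpNorm_single {p : ℝ≥0∞} (hp : 1 ≤ p) {N : ℕ} (j : Fin N) :
    lpNorm p (Pi.single j (1 : 𝕜)) = 1 := by
  haveI : Nonempty (Fin N) := ⟨j⟩
  unfold lpNorm
  split
  · apply le_antisymm
    · apply ciSup_le
      intro i
      rcases eq_or_ne i j with rfl | hne
      · simp
      · simp [Pi.single_apply, hne]
    · have h2 : ∀ i, ‖(Pi.single j (1:𝕜) : Fin N → 𝕜) i‖ ≤ ⨆ i, ‖(Pi.single j (1:𝕜) : Fin N → 𝕜) i‖ :=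
        fun i => le_ciSup (f := fun i => ‖(Pi.single j (1:𝕜) : Fin N → 𝕜) i‖)
          (Set.Finite.bddAbove (Set.finite_range _)) i
      have := h2 j
      simpa using this
  · rename_i h
    have ht0 : 0 < p.toReal := aux_toReal_pos hp h
    have : ∑ i, ‖(Pi.single j (1:𝕜) : Fin N → 𝕜) i‖ ^ p.toReal = 1 := by
      rw [Finset.sum_eq_single j]
      · simp
      · intro i _ hij
        rw [Pi.single_apply, if_neg hij]
        simp [Real.zero_rpow ht0.ne']
      · intro h; exact absurd (Finset.mem_univ j) h
    rw [this, Real.one_rpow]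

lemma lpNorm_pos {p : ℝ≥0∞} (hp : 1 ≤ p) {N : ℕ} {x : Fin N → 𝕜} (hx : x ≠ 0) :
    0 < lpNorm p x := by
  obtain ⟨j, hj⟩ := Function.ne_iff.mp hx
  have : (0:ℝ) < ‖x j‖ := by simpa using hj
  exact lt_of_lt_of_le this (apply_le_lpNorm hp x j)

lemma ratio_le_sum {p q : ℝ≥0∞} (hp : 1 ≤ p) (hq : 1 ≤ q) {M N : ℕ}
    (A : Matrix (Fin M) (Fin N) 𝕜) {z : Fin N → 𝕜} (hz : z ≠ 0) :
    lpNorm q (A.mulVec z) / lpNorm p z ≤ ∑ i, ∑ j, ‖A i j‖ := by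
  have hzpos := lpNorm_pos hp hz
  rw [div_le_iff₀ hzpos]
  calc lpNorm q (A.mulVec z) ≤ ∑ i, ‖A.mulVec z i‖ := lpNorm_le_sum hq _
    _ ≤ ∑ i, ∑ j, ‖A i j‖ * ‖z j‖ := by
        apply Finset.sum_le_sum
        intro i _
        calc ‖A.mulVec z i‖ = ‖∑ j, A i j * z j‖ := rfl
          _ ≤ ∑ j, ‖A i j * z j‖ := norm_sum_le _ _
          _ = ∑ j, ‖A i j‖ * ‖z j‖ := by simp [norm_mul]
    _ ≤ ∑ i, ∑ j, ‖A i j‖ * lpNorm p z := by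
        apply Finset.sum_le_sum
        intro i _
        apply Finset.sum_le_sum
        intro j _
        exact mul_le_mul_of_nonneg_left (apply_le_lpNorm hp z j) (norm_nonneg _)
    _ = (∑ i, ∑ j, ‖A i j‖) * lpNorm p z := by
        rw [Finset.sum_mul]
        exact Finset.sum_congr rfl fun i _ => (Finset.sum_mul _ _ _).symm

lemma opNorm_nonneg (p q : ℝ≥0∞) {M N : ℕ} (A : Matrix (Fin M) (Fin N) 𝕜) :
    0 ≤ opNorm p q A :=
  Real.iSup_nonneg fun z => div_nonneg (lpNorm_nonneg _ _) (lpNorm_nonneg _ _)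

lemma opNorm_bddAbove {p q : ℝ≥0∞} (hp : 1 ≤ p) (hq : 1 ≤ q) {M N : ℕ}
    (A : Matrix (Fin M) (Fin N) 𝕜) :
    BddAbove (Set.range fun z : {z : Fin N → 𝕜 // z ≠ 0} =>
      lpNorm q (A.mulVec z.1) / lpNorm p z.1) := by
  refine ⟨∑ i, ∑ j, ‖A i j‖, ?_⟩
  rintro _ ⟨z, rfl⟩
  exact ratio_le_sum hp hq A z.2

lemma entry_le_opNorm {p q : ℝ≥0∞} (hp : 1 ≤ p) (hq : 1 ≤ q) {M N : ℕ}
    (A : Matrix (Fin M) (Fin N) 𝕜) (i : Fin M) (j : Fin N) :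
    ‖A i j‖ ≤ opNorm p q A := by
  have hz : (Pi.single j (1:𝕜) : Fin N → 𝕜) ≠ 0 := by
    intro h
    have := congrFun h j
    simp at this
  have hle : lpNorm q (A.mulVec (Pi.single j (1:𝕜) : Fin N → 𝕜)) /
      lpNorm p (Pi.single j (1:𝕜) : Fin N → 𝕜) ≤ opNorm p q A :=
    le_ciSup (opNorm_bddAbove hp hq A)
      (⟨(Pi.single j (1:𝕜) : Fin N → 𝕜), hz⟩ : {z : Fin N → 𝕜 // z ≠ 0})
  rw [lpNorm_single hp, div_one] at hle
  refine le_trans ?_ hle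
  have : A.mulVec (Pi.single j (1:𝕜) : Fin N → 𝕜) = fun i' => A i' j * 1 :=
    Matrix.mulVec_single A j 1
  rw [this]
  have := apply_le_lpNorm hq (fun i' => A i' j * (1:𝕜)) i
  simpa using this

lemma opNorm_le_sum {p q : ℝ≥0∞} (hp : 1 ≤ p) (hq : 1 ≤ q) {M N : ℕ}
    (A : Matrix (Fin M) (Fin N) 𝕜) :
    opNorm p q A ≤ ∑ i, ∑ j, ‖A i j‖ := by
  unfold opNorm
  cases isEmpty_or_nonempty {z : Fin N → 𝕜 // z ≠ 0} with
  | inl h =>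
      rw [iSup_of_empty']
      simp only [Real.sSup_empty]
      exact Finset.sum_nonneg fun i _ => Finset.sum_nonneg fun j _ => norm_nonneg _
  | inr h =>
      exact ciSup_le fun z => ratio_le_sum hp hq A z.2

lemma sum_norm_std {M N : ℕ} (a : Fin M) (b : Fin N) :
    ∑ i, ∑ j, ‖single a b (1:𝕜) i j‖ = 1 := by
  rw [Finset.sum_eq_single a]
  · rw [Finset.sum_eq_single b]
    · simp
    · intro j _ hj
      rw [Matrix.single_apply_of_ne _ _ _ _ _ (by tauto)]
      simp
    · intro h; exact absurd (Finset.mem_univ b) h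
  · intro i _ hi
    apply Finset.sum_eq_zero
    intro j _
    rw [Matrix.single_apply_of_ne _ _ _ _ _ (by tauto)]
    simp
  · intro h; exact absurd (Finset.mem_univ a) h

lemma std_mul_std {L M N : ℕ} (a : Fin L) (b : Fin M) (c : Fin N) :
    (single a b (1:𝕜)) * (single b c (1:𝕜)) = single a c 1 := by
  ext i k
  simp only [Matrix.mul_apply, Matrix.single, Matrix.of_apply, ite_and, mul_ite, ite_mul,
    mul_zero, zero_mul, mul_one, one_mul, Finset.sum_ite_eq, Finset.mem_univ, if_true]
  split <;> split <;> simp_all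

lemma opNorm_std {p q : ℝ≥0∞} (hp : 1 ≤ p) (hq : 1 ≤ q) {M N : ℕ}
    (a : Fin M) (b : Fin N) :
    opNorm p q (single a b (1:𝕜)) = 1 := by
  apply le_antisymm
  · calc opNorm p q (single a b (1:𝕜)) ≤ ∑ i, ∑ j, ‖single a b (1:𝕜) i j‖ :=
        opNorm_le_sum hp hq _
      _ = 1 := sum_norm_std a b
  · have := entry_le_opNorm hp hq (single a b (1:𝕜)) a b
    simpa using this

lemma stdBasisMatrix_ne_zero' {M N : ℕ} (a : Fin M) (b : Fin N) :
    single a b (1:𝕜) ≠ 0 := by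
  intro h
  have := congrFun (congrFun h a) b
  simp at this

lemma matrix_exists_ne_zero {M N : ℕ} {A : Matrix (Fin M) (Fin N) 𝕜} (hA : A ≠ 0) :
    ∃ i j, A i j ≠ 0 := by
  by_contra h
  push_neg at h
  apply hA
  ext i j
  simpa using h i j

lemma opNorm_pos {p q : ℝ≥0∞} (hp : 1 ≤ p) (hq : 1 ≤ q) {M N : ℕ}
    {A : Matrix (Fin M) (Fin N) 𝕜} (hA : A ≠ 0) : 0 < opNorm p q A := by
  obtain ⟨i, j, hij⟩ := matrix_exists_ne_zero hA
  have : (0:ℝ) < ‖A i j‖ := by simpa using hij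
  exact lt_of_lt_of_le this (entry_le_opNorm hp hq A i j)

lemma muNorm_bddAbove (𝕜 : Type*) [RCLike 𝕜] {p q r : ℝ≥0∞}
    (hp : 1 ≤ p) (hq : 1 ≤ q) (hr : 1 ≤ r) (l m n : ℕ) :
    BddAbove (Set.range fun T :
        {T : Matrix (Fin l) (Fin m) 𝕜 × Matrix (Fin m) (Fin n) 𝕜 ×
          Matrix (Fin n) (Fin l) 𝕜 // T.1 ≠ 0 ∧ T.2.1 ≠ 0 ∧ T.2.2 ≠ 0} =>
      ‖(T.1.1 * T.1.2.1 * T.1.2.2).trace‖ /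
        (opNorm p q T.1.1 * opNorm q r T.1.2.2 * opNorm r p T.1.2.1)) := by
  refine ⟨(l : ℝ) * m * n, ?_⟩
  rintro _ ⟨⟨⟨X, M, Y⟩, hX, hM, hY⟩, rfl⟩
  simp only
  have hXpos := opNorm_pos hp hq hX
  have hMpos := opNorm_pos hr hp hM
  have hYpos := opNorm_pos hq hr hY
  have hden : 0 < opNorm p q X * opNorm q r Y * opNorm r p M := by positivity
  rw [div_le_iff₀ hden]
  have htrace : ‖(X * M * Y).trace‖ ≤
      ∑ i : Fin l, ∑ k : Fin n, ∑ j : Fin m, ‖X i j‖ * ‖M j k‖ * ‖Y k i‖ := by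
    calc ‖(X * M * Y).trace‖ = ‖∑ i, (X * M * Y) i i‖ := rfl
      _ ≤ ∑ i, ‖(X * M * Y) i i‖ := norm_sum_le _ _
      _ ≤ ∑ i : Fin l, ∑ k : Fin n, ∑ j : Fin m, ‖X i j‖ * ‖M j k‖ * ‖Y k i‖ := by
          apply Finset.sum_le_sum
          intro i _
          calc ‖(X * M * Y) i i‖ = ‖∑ k, (X * M) i k * Y k i‖ := rfl
            _ ≤ ∑ k, ‖(X * M) i k * Y k i‖ := norm_sum_le _ _
            _ ≤ ∑ k : Fin n, ∑ j : Fin m, ‖X i j‖ * ‖M j k‖ * ‖Y k i‖ := by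
                apply Finset.sum_le_sum
                intro k _
                calc ‖(X * M) i k * Y k i‖ = ‖(X * M) i k‖ * ‖Y k i‖ := norm_mul _ _
                  _ = ‖∑ j, X i j * M j k‖ * ‖Y k i‖ := rfl
                  _ ≤ (∑ j, ‖X i j * M j k‖) * ‖Y k i‖ :=
                      mul_le_mul_of_nonneg_right (norm_sum_le _ _) (norm_nonneg _)
                  _ = ∑ j, ‖X i j‖ * ‖M j k‖ * ‖Y k i‖ := by
                      rw [Finset.sum_mul]
                      exact Finset.sum_congr rfl fun j _ => by rw [norm_mul]
  refine htrace.trans ?_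
  have hterm : ∀ (i : Fin l) (k : Fin n) (j : Fin m),
      ‖X i j‖ * ‖M j k‖ * ‖Y k i‖ ≤
        opNorm p q X * opNorm q r Y * opNorm r p M := by
    intro i k j
    have h1 := entry_le_opNorm hp hq X i j
    have h2 := entry_le_opNorm hr hp M j k
    have h3 := entry_le_opNorm hq hr Y k i
    calc ‖X i j‖ * ‖M j k‖ * ‖Y k i‖
        ≤ opNorm p q X * opNorm r p M * opNorm q r Y := by
          apply mul_le_mul _ h3 (norm_nonneg _) (by positivity)
          exact mul_le_mul h1 h2 (norm_nonneg _) hXpos.le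
      _ = opNorm p q X * opNorm q r Y * opNorm r p M := by ring
  calc ∑ i : Fin l, ∑ k : Fin n, ∑ j : Fin m, ‖X i j‖ * ‖M j k‖ * ‖Y k i‖
      ≤ ∑ _i : Fin l, ∑ _k : Fin n, ∑ _j : Fin m,
          opNorm p q X * opNorm q r Y * opNorm r p M := by
        apply Finset.sum_le_sum; intro i _
        apply Finset.sum_le_sum; intro k _
        apply Finset.sum_le_sum; intro j _
        exact hterm i k j
    _ = (l : ℝ) * m * n * (opNorm p q X * opNorm q r Y * opNorm r p M) := by
        simp [Finset.sum_const, Finset.card_univ]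
        ring
    _ = (l : ℝ) * m * n * (opNorm p q X * opNorm q r Y * opNorm r p M) := rfl

lemma one_le_muNorm (𝕜 : Type*) [RCLike 𝕜] {p q r : ℝ≥0∞}
    (hp : 1 ≤ p) (hq : 1 ≤ q) (hr : 1 ≤ r) {l m n : ℕ}
    (hl : 0 < l) (hm : 0 < m) (hn : 0 < n) :
    (1 : ℝ) ≤ muNorm 𝕜 p q r l m n := by
  set a : Fin l := ⟨0, hl⟩
  set b : Fin m := ⟨0, hm⟩
  set c : Fin n := ⟨0, hn⟩
  set X : Matrix (Fin l) (Fin m) 𝕜 := single a b 1 with hXdef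
  set M : Matrix (Fin m) (Fin n) 𝕜 := single b c 1 with hMdef
  set Y : Matrix (Fin n) (Fin l) 𝕜 := single c a 1 with hYdef
  have hX : X ≠ 0 := stdBasisMatrix_ne_zero' a b
  have hM : M ≠ 0 := stdBasisMatrix_ne_zero' b c
  have hY : Y ≠ 0 := stdBasisMatrix_ne_zero' c a
  have hval : ‖(X * M * Y).trace‖ /
      (opNorm p q X * opNorm q r Y * opNorm r p M) = 1 := by
    have htr : (X * M * Y).trace = 1 := by
      rw [hXdef, hMdef, hYdef, std_mul_std, std_mul_std,
        Matrix.trace_single_eq_same]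
    rw [htr, opNorm_std hp hq, opNorm_std hq hr, opNorm_std hr hp]
    simp
  have hle : ‖(X * M * Y).trace‖ /
      (opNorm p q X * opNorm q r Y * opNorm r p M) ≤ muNorm 𝕜 p q r l m n :=
    le_ciSup (muNorm_bddAbove 𝕜 hp hq hr l m n)
      (⟨(X, M, Y), hX, hM, hY⟩ :
        {T : Matrix (Fin l) (Fin m) 𝕜 × Matrix (Fin m) (Fin n) 𝕜 ×
          Matrix (Fin n) (Fin l) 𝕜 // T.1 ≠ 0 ∧ T.2.1 ≠ 0 ∧ T.2.2 ≠ 0})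
  rw [hval] at hle
  exact hle

end Aux

/-- Lower bound on the (p,q,r)-norm of the Strassen tensor:
`1/(l^{|1/q−1/2|} m^{|1/p−1/2|} n^{|1/r−1/2|}) ≤ ‖μ_{l,m,n}‖_{p,q,r}`. -/
theorem stmt15 (𝕜 : Type*) [RCLike 𝕜] (p q r : ℝ≥0∞) (hp : 1 ≤ p) (hq : 1 ≤ q) (hr : 1 ≤ r)
    (l m n : ℕ) (hl : 0 < l) (hm : 0 < m) (hn : 0 < n) :
    1 / ((l : ℝ) ^ |1 / q.toReal - 1 / 2| * (m : ℝ) ^ |1 / p.toReal - 1 / 2| *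
        (n : ℝ) ^ |1 / r.toReal - 1 / 2|) ≤ muNorm 𝕜 p q r l m n := by
  have hl1 : (1:ℝ) ≤ l := by exact_mod_cast hl
  have hm1 : (1:ℝ) ≤ m := by exact_mod_cast hm
  have hn1 : (1:ℝ) ≤ n := by exact_mod_cast hn
  have h1 : (1:ℝ) ≤ (l : ℝ) ^ |1 / q.toReal - 1 / 2| :=
    Real.one_le_rpow hl1 (abs_nonneg _)
  have h2 : (1:ℝ) ≤ (m : ℝ) ^ |1 / p.toReal - 1 / 2| :=
    Real.one_le_rpow hm1 (abs_nonneg _)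
  have h3 : (1:ℝ) ≤ (n : ℝ) ^ |1 / r.toReal - 1 / 2| :=
    Real.one_le_rpow hn1 (abs_nonneg _)
  have hprod : (1:ℝ) ≤ (l : ℝ) ^ |1 / q.toReal - 1 / 2| * (m : ℝ) ^ |1 / p.toReal - 1 / 2| *
      (n : ℝ) ^ |1 / r.toReal - 1 / 2| := by
    calc (1:ℝ) = 1 * 1 * 1 := by ring
      _ ≤ _ := by
        apply mul_le_mul _ h3 (by norm_num) (by positivity)
        exact mul_le_mul h1 h2 (by norm_num) (by linarith)
  calc 1 / ((l : ℝ) ^ |1 / q.toReal - 1 / 2| * (m : ℝ) ^ |1 / p.toReal - 1 / 2| *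
        (n : ℝ) ^ |1 / r.toReal - 1 / 2|) ≤ 1 := by
        rw [div_le_one (by linarith)]
        exact hprod
    _ ≤ muNorm 𝕜 p q r l m n := one_le_muNorm 𝕜 hp hq hr hl hm hn
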